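/- If a simplicial complex Δ has a face comparable (by inclusion) to every other nonempty face of Δ — equivalently, G(Δ) has a vertex adjacent to all other vertices — and Δ has at least one face of positive dimension, then Δ is a simplex (its faces are exactly all subsets of its vertex set). -/
import Mathlib


/-- If a simplicial complex `Δ` (on vertex set `V`, all singletons being faces)
has a nonempty face comparable to every other nonempty face, and `Δ` has a face
of positive dimension, then `Δ` is a simplex: every subset of `V` is a face. -/
theorem complex_with_dominating_face_is_simplex {V : Type*}
    [DecidableEq V] [Fintype V]
    (Δ : Set (Finset V)) (hΔ : ∀ F ∈ Δ, ∀ E ⊆ F, E ∈ Δ)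
    (hv : ∀ v : V, ({v} : Finset V) ∈ Δ)
    (hdom : ∃ A ∈ Δ, A ≠ ∅ ∧ ∀ F ∈ Δ, F ≠ ∅ → F ≠ A → (F ⊆ A ∨ A ⊆ F))
    (hpos : ∃ F ∈ Δ, 2 ≤ F.card) :
    ∀ F : Finset V, F ∈ Δ := by
  obtain ⟨A, hA, hAne, hAdom⟩ := hdom
  obtain ⟨G, hG, hGcard⟩ := hpos
  -- A is not a singleton
  have hAnotsing : ∀ v : V, A ≠ {v} := by
    intro v hAv
    obtain ⟨u, hu, w, hw, huw⟩ := Finset.one_lt_card.mp hGcard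
    -- one of u, w differs from v
    have : ∃ x ∈ G, x ≠ v := by
      by_cases h : u = v
      · exact ⟨w, hw, fun hwv => huw (h.trans hwv.symm)⟩
      · exact ⟨u, hu, h⟩
    obtain ⟨x, hx, hxv⟩ := this
    have hxA : ({x} : Finset V) ≠ A := by
      rw [hAv]; simp [hxv]
    rcases hAdom {x} (hv x) (by simp) hxA with h | h
    · exact hxv (Finset.mem_singleton.mp (hAv ▸ h (Finset.mem_singleton_self x)))
    · have hvA : v ∈ A := hAv ▸ Finset.mem_singleton_self v
      exact hxv (Finset.mem_singleton.mp (h hvA)).symm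
  -- every vertex is in A
  have hAuniv : A = Finset.univ := by
    apply Finset.eq_univ_iff_forall.mpr
    intro v
    by_cases hvA : ({v} : Finset V) = A
    · rw [← hvA]; exact Finset.mem_singleton_self v
    rcases hAdom {v} (hv v) (by simp) hvA with h | h
    · exact h (Finset.mem_singleton_self v)
    · exact absurd (Finset.eq_singleton_iff_nonempty_unique_mem.mpr
        ⟨Finset.nonempty_iff_ne_empty.mpr hAne, fun x hx => Finset.mem_singleton.mp (h hx)⟩) (hAnotsing v)
  intro F
  exact hΔ A hA F (hAuniv ▸ Finset.subset_univ F)
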